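/- Under the hypotheses of the energy identity (i.e., $m_0\ddot{x} = 2w_2\cos\phi - 1$, $x = a\cos\phi_0 - a\sin\phi_0\cot\phi$, $x(0)=0$, $\dot{x}(0)=0$, $\phi(0)=\phi_0$, $0 < \phi < \pi/2$), if at time $t_0$ the angle satisfies $\phi(t_0) = \theta^*$ where $\cos\theta^* = 1/(2w_2)$ and $\phi_0 < \theta^*$ (so that $2aw_2 - x(t_0) - 2aw_2\sin\phi_0/\sin\theta^* > 0$), then the speed at $t_0$ is $|\dot{x}(t_0)| = \sqrt{\frac{2}{m_0}\left(2aw_2 - x(t_0) - \frac{2aw_2\sin\phi_0}{\sin\theta^*}\right)}$, and in particular $\dot{x}(t_0) \ne 0$. -/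

import Mathlib

open Real

theorem speed_at_fermat_point
    (a φ₀ w₂ m₀ θ t₀ : ℝ) (x φ : ℝ → ℝ)
    (ha : 0 < a) (hφ₀ : 0 < φ₀) (hφ₀' : φ₀ < π / 2) (hw₂ : 0 < w₂) (hm₀ : 0 < m₀)
    (hφdiff : Differentiable ℝ φ) (hφ'diff : Differentiable ℝ (deriv φ))
    (hxdiff : Differentiable ℝ x) (hx'diff : Differentiable ℝ (deriv x))
    (hx : ∀ t, x t = a * cos φ₀ - a * sin φ₀ * (cos (φ t) / sin (φ t)))
    (hφrange : ∀ t, 0 < φ t ∧ φ t < π / 2)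
    (hx0 : x 0 = 0) (hx'0 : deriv x 0 = 0) (hφ0 : φ 0 = φ₀)
    (hODE : ∀ t, m₀ * deriv (deriv x) t = 2 * w₂ * cos (φ t) - 1)
    (hθ : cos θ = 1 / (2 * w₂)) (hφ₀θ : φ₀ < θ)
    (ht₀ : φ t₀ = θ)
    (hpos : 0 < 2 * a * w₂ - x t₀ - 2 * a * w₂ * (sin φ₀ / sin θ)) :
    |deriv x t₀| =
      Real.sqrt (2 / m₀ * (2 * a * w₂ - x t₀ - 2 * a * w₂ * (sin φ₀ / sin θ))) ∧
    deriv x t₀ ≠ 0 := by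
  have hpi := Real.pi_pos
  have hsin : ∀ t, 0 < sin (φ t) := fun t =>
    Real.sin_pos_of_pos_of_lt_pi (hφrange t).1 (lt_trans (hφrange t).2 (by linarith))
  have hsφ₀ : 0 < sin φ₀ := Real.sin_pos_of_pos_of_lt_pi hφ₀ (by linarith)
  -- formula for deriv x
  have hxfun : x = fun t => a * cos φ₀ - a * sin φ₀ * (cos (φ t) / sin (φ t)) := funext hx
  have hderivx : ∀ t, deriv x t = a * sin φ₀ * deriv φ t / (sin (φ t))^2 := by
    intro t
    have h1 : HasDerivAt (fun t => sin (φ t)) (cos (φ t) * deriv φ t) t :=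
      (Real.hasDerivAt_sin (φ t)).comp t (hφdiff t).hasDerivAt
    have h2 : HasDerivAt (fun t => cos (φ t)) (-sin (φ t) * deriv φ t) t :=
      (Real.hasDerivAt_cos (φ t)).comp t (hφdiff t).hasDerivAt
    have h3 : HasDerivAt (fun t => cos (φ t) / sin (φ t))
        ((-sin (φ t) * deriv φ t * sin (φ t) - cos (φ t) * (cos (φ t) * deriv φ t)) /
          (sin (φ t))^2) t := h2.div h1 (ne_of_gt (hsin t))
    have h4 : HasDerivAt x
        (0 - a * sin φ₀ *
          ((-sin (φ t) * deriv φ t * sin (φ t) - cos (φ t) * (cos (φ t) * deriv φ t)) /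
            (sin (φ t))^2)) t := by
      rw [hxfun]
      exact (hasDerivAt_const t (a * cos φ₀)).sub ((h3.const_mul (a * sin φ₀)))
    rw [h4.deriv]
    have hs2 : (sin (φ t))^2 ≠ 0 := pow_ne_zero 2 (ne_of_gt (hsin t))
    have hpy := Real.sin_sq_add_cos_sq (φ t)
    rw [show (-sin (φ t) * deriv φ t * sin (φ t) - cos (φ t) * (cos (φ t) * deriv φ t))
        = -deriv φ t by linear_combination (-deriv φ t) * hpy]
    ring
  -- energy function
  set E : ℝ → ℝ := fun t => m₀ / 2 * (deriv x t)^2 + x t + 2 * a * w₂ * sin φ₀ / sin (φ t)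
    with hE
  have hEderiv : ∀ t, HasDerivAt E 0 t := by
    intro t
    have h1 : HasDerivAt (fun t => sin (φ t)) (cos (φ t) * deriv φ t) t :=
      (Real.hasDerivAt_sin (φ t)).comp t (hφdiff t).hasDerivAt
    have hinv : HasDerivAt (fun t => 2 * a * w₂ * sin φ₀ / sin (φ t))
        (-(2 * a * w₂ * sin φ₀ * (cos (φ t) * deriv φ t)) / (sin (φ t))^2) t := by
      have := ((h1.inv (ne_of_gt (hsin t))).const_mul (2 * a * w₂ * sin φ₀))
      simpa [div_eq_mul_inv, mul_comm, mul_assoc, mul_left_comm, neg_div, mul_div_assoc]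
        using this
    have hsq : HasDerivAt (fun t => m₀ / 2 * (deriv x t)^2)
        (m₀ / 2 * (2 * deriv x t * deriv (deriv x) t)) t := by
      have hx2 : HasDerivAt (fun t => (deriv x t)^2)
          (2 * deriv x t * deriv (deriv x) t) t := by
        have := ((hx'diff t).hasDerivAt).mul ((hx'diff t).hasDerivAt)
        rw [show (fun t => (deriv x t)^2) = deriv x * deriv x from by ext s; simp [pow_two]]
        exact this.congr_deriv (by ring)
      exact hx2.const_mul (m₀ / 2)
    have hsum : HasDerivAt E
        (m₀ / 2 * (2 * deriv x t * deriv (deriv x) t) + deriv x t +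
          -(2 * a * w₂ * sin φ₀ * (cos (φ t) * deriv φ t)) / (sin (φ t))^2) t :=
      (hsq.add (hxdiff t).hasDerivAt).add hinv
    have key : m₀ / 2 * (2 * deriv x t * deriv (deriv x) t) + deriv x t +
        -(2 * a * w₂ * sin φ₀ * (cos (φ t) * deriv φ t)) / (sin (φ t))^2 = 0 := by
      have hO := hODE t
      have hdx := hderivx t
      have hs2 : (sin (φ t))^2 ≠ 0 := pow_ne_zero 2 (ne_of_gt (hsin t))
      rw [hdx]
      linear_combination (a * sin φ₀ * deriv φ t / sin (φ t)^2) * hO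
    rwa [key] at hsum
  have hconst : E t₀ = E 0 := by
    have hdiff : Differentiable ℝ E := fun t => (hEderiv t).differentiableAt
    have hz : ∀ t, deriv E t = 0 := fun t => (hEderiv t).deriv
    exact is_const_of_deriv_eq_zero hdiff hz t₀ 0
  have hE0 : E 0 = 2 * a * w₂ := by
    simp only [hE, hx0, hx'0, hφ0]
    field_simp
    ring
  have hEt₀ : m₀ / 2 * (deriv x t₀)^2 + x t₀ + 2 * a * w₂ * sin φ₀ / sin θ = 2 * a * w₂ := by
    have := hconst
    rw [hE0] at this
    simpa [hE, ht₀] using this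
  have hsq : (deriv x t₀)^2 = 2 / m₀ * (2 * a * w₂ - x t₀ - 2 * a * w₂ * (sin φ₀ / sin θ)) := by
    have hm : m₀ ≠ 0 := ne_of_gt hm₀
    field_simp
    nlinarith [hEt₀]
  constructor
  · rw [← hsq, Real.sqrt_sq_eq_abs]
  · have hp : (0:ℝ) < 2 / m₀ * (2 * a * w₂ - x t₀ - 2 * a * w₂ * (sin φ₀ / sin θ)) :=
      mul_pos (by positivity) hpos
    have h2 : (0:ℝ) < (deriv x t₀)^2 := hsq ▸ hp
    intro h
    rw [h] at h2
    simp at h2
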